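/- Let α ∈ ℝ, let y : ℝ → ℝ, and let t₀ ≠ 0 with t₀·y(t₀) + t₀² − α ≠ 0. Suppose y has derivative 1/(t₀·y(t₀) + t₀² − α) at t₀ — that is, y solves the AIR equation with parameters s₂ = 0, s₁ = 1, s₀ = 0, r₂ = 1, r₁ = 0, r₀ = −α, a₃ = a₂ = a₁ = 0, a₀ = −1. Define u(t) = 1/(y(t) − (α − t²)/t). Then u has derivative −u(t₀)³/t₀ − (α + t₀²)·u(t₀)²/t₀² at t₀. Hence Appell's parameterized Class D equation y' = −y³/x − (α + x²)y²/x² is a member of the AIR class. -/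

import Mathlib

/-- Appell's parameterized Class D equation `y' = −y³/x − (α + x²)y²/x²` is a member
of the AIR class: it is obtained from the AIR equation with parameters
`s₂ = 0, s₁ = 1, s₀ = 0, r₂ = 1, r₁ = 0, r₀ = −α, a₃ = a₂ = a₁ = 0, a₀ = −1`
by the change of variables `{x = t, y = 1/u + (α − t²)/t}`, i.e.
`u = 1/(y − (α − t²)/t)`. -/
theorem classD_member_of_AIR
    (α : ℝ) (y : ℝ → ℝ) (t₀ : ℝ) (ht₀ : t₀ ≠ 0)
    (hden : t₀ * y t₀ + t₀ ^ 2 - α ≠ 0)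
    (hy : HasDerivAt y (1 / (t₀ * y t₀ + t₀ ^ 2 - α)) t₀)
    (u : ℝ → ℝ) (hu : u = fun t => 1 / (y t - (α - t ^ 2) / t)) :
    HasDerivAt u
      (-(u t₀) ^ 3 / t₀ - (α + t₀ ^ 2) * (u t₀) ^ 2 / t₀ ^ 2) t₀ := by
  have hv0 : y t₀ - (α - t₀ ^ 2) / t₀ ≠ 0 := by
    rw [sub_ne_zero]
    intro h
    apply hden
    field_simp at h
    nlinarith [h]
  have hq : HasDerivAt (fun t : ℝ => (α - t ^ 2) / t)
      ((-(2 * t₀) * t₀ - (α - t₀ ^ 2)) / t₀ ^ 2) t₀ := by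
    have h1 : HasDerivAt (fun t : ℝ => α - t ^ 2) (-(2 * t₀)) t₀ := by
      simpa using (hasDerivAt_pow 2 t₀).const_sub α
    simpa [Pi.div_def] using h1.div (hasDerivAt_id t₀) ht₀
  have hv : HasDerivAt (fun t => y t - (α - t ^ 2) / t)
      (1 / (t₀ * y t₀ + t₀ ^ 2 - α) - (-(2 * t₀) * t₀ - (α - t₀ ^ 2)) / t₀ ^ 2) t₀ :=
    hy.sub hq
  have hinv := hv.inv hv0
  have hU : HasDerivAt u
      (-(1 / (t₀ * y t₀ + t₀ ^ 2 - α) - (-(2 * t₀) * t₀ - (α - t₀ ^ 2)) / t₀ ^ 2)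
        / (y t₀ - (α - t₀ ^ 2) / t₀) ^ 2) t₀ := by
    rw [hu]
    simpa [one_div, Pi.inv_def] using hinv
  have key : y t₀ - (α - t₀ ^ 2) / t₀ = (t₀ * y t₀ + t₀ ^ 2 - α) / t₀ := by
    field_simp; ring
  convert hU using 1
  rw [hu]
  simp only [key]
  generalize t₀ * y t₀ + t₀ ^ 2 - α = D at hden ⊢
  field_simp
  ring
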